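/- arXiv:0907.4384 — 3 statements merged into one kernel-verified Lean document; each statement's English description precedes it below -/
import Mathlib

section
/- For every integer n ≥ 2, the product of Γ(k/n) over all integers k with 1 ≤ k ≤ n and gcd(k,n) = 1 equals (2π)^(φ(n)/2) / exp(Λ(n)/2), where φ is Euler's totient function and Λ is the von Mangoldt function. -/
open Real Finset

-- abs of 1 - e^{iθ}
lemma abs_one_sub_exp (θ : ℝ) (h0 : 0 < θ) (h1 : θ < 2 * π) :
    ‖1 - Complex.exp (θ * Complex.I)‖ = 2 * Real.sin (θ / 2) := by
  have hz : ∀ z : ℂ, z * Complex.I / 2 * 2 * -Complex.I = z := fun z => by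
    linear_combination (-z) * Complex.I_sq
  have e1 : Complex.exp ((θ / 2 : ℝ) * Complex.I) * Complex.exp (-(θ / 2 : ℝ) * Complex.I) = 1 := by
    rw [← Complex.exp_add, ← Complex.exp_zero]
    ring_nf
  have e2 : Complex.exp ((θ / 2 : ℝ) * Complex.I) * Complex.exp ((θ / 2 : ℝ) * Complex.I)
      = Complex.exp (θ * Complex.I) := by
    rw [← Complex.exp_add]
    push_cast
    ring_nf
  have key : (1 : ℂ) - Complex.exp (θ * Complex.I) =
      Complex.exp ((θ / 2 : ℝ) * Complex.I) *
        (Complex.sin ((θ / 2 : ℝ)) * 2 * -Complex.I) := by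
    have : Complex.sin ((θ / 2 : ℝ)) * 2 * -Complex.I
        = Complex.exp (-(θ / 2 : ℝ) * Complex.I) - Complex.exp ((θ / 2 : ℝ) * Complex.I) := by
      rw [Complex.sin]
      linear_combination -(Complex.exp (-(θ / 2 : ℝ) * Complex.I)
        - Complex.exp ((θ / 2 : ℝ) * Complex.I)) * Complex.I_sq
    rw [this, mul_sub, e1, e2]
  rw [key, norm_mul, Complex.norm_exp]
  have hre : ((θ / 2 : ℝ) * Complex.I).re = 0 := by simp
  rw [hre, Real.exp_zero, one_mul, ← Complex.ofReal_sin]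
  have hs : 0 ≤ Real.sin (θ / 2) :=
    Real.sin_nonneg_of_nonneg_of_le_pi (by linarith) (by linarith)
  simp only [norm_mul, Complex.norm_real, Real.norm_eq_abs, Complex.norm_two, norm_neg, Complex.norm_I]
  rw [abs_of_nonneg hs]; ring


lemma filter_coprime_Icc_eq (n : ℕ) (hn : 2 ≤ n) :
    (Finset.Icc 1 n).filter (fun k => Nat.gcd k n = 1) =
      (Finset.range n).filter (fun k => Nat.gcd k n = 1) := by
  ext k
  simp only [Finset.mem_filter, Finset.mem_Icc, Finset.mem_range]
  constructor
  · rintro ⟨⟨h1, h2⟩, h3⟩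
    refine ⟨?_, h3⟩
    rcases lt_or_eq_of_le h2 with h | rfl
    · exact h
    · rw [Nat.gcd_self] at h3; omega
  · rintro ⟨h1, h3⟩
    refine ⟨⟨?_, h1.le⟩, h3⟩
    rcases Nat.eq_zero_or_pos k with rfl | h
    · rw [Nat.gcd_zero_left] at h3; omega
    · exact h

lemma card_filter_coprime (n : ℕ) (hn : 2 ≤ n) :
    ((Finset.Icc 1 n).filter (fun k => Nat.gcd k n = 1)).card = n.totient := by
  rw [filter_coprime_Icc_eq n hn, Nat.totient]
  congr 1
  apply Finset.filter_congr
  intro k _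
  simp [Nat.Coprime, Nat.gcd_comm]

lemma cyclo_eval_real (n : ℕ) (hn : 2 ≤ n) :
    (Polynomial.cyclotomic n ℝ).eval 1 = Real.exp (ArithmeticFunction.vonMangoldt n) := by
  by_cases h : IsPrimePow n
  · obtain ⟨p, k, hp, hk, rfl⟩ := h
    rw [← Nat.prime_iff] at hp
    have : Fact (p.Prime) := ⟨hp⟩
    obtain ⟨k, rfl⟩ : ∃ m, k = m + 1 := ⟨k - 1, by omega⟩
    rw [Polynomial.eval_one_cyclotomic_prime_pow,
      ArithmeticFunction.vonMangoldt_apply_pow (by omega),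
      ArithmeticFunction.vonMangoldt_apply_prime hp,
      Real.exp_log (by exact_mod_cast hp.pos)]
  · rw [Polynomial.eval_one_cyclotomic_not_prime_pow, ArithmeticFunction.vonMangoldt_eq_zero_iff.2 h,
      Real.exp_zero]
    intro p hp k hpk
    rcases Nat.eq_zero_or_pos k with rfl | hk
    · simp at hpk; omega
    · exact h ⟨p, k, hp.prime, hk, hpk⟩

lemma prod_one_sub_exp (n : ℕ) (hn : 2 ≤ n) :
    ∏ k ∈ (Finset.Icc 1 n).filter (fun k => Nat.gcd k n = 1),
      (1 - Complex.exp (2 * π * Complex.I * (k / n))) =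
    ((Real.exp (ArithmeticFunction.vonMangoldt n) : ℝ) : ℂ) := by
  have hn0 : n ≠ 0 := by omega
  have hζ := Complex.isPrimitiveRoot_exp n hn0
  have h1 : (Polynomial.cyclotomic n ℂ).eval 1 = ∏ μ ∈ primitiveRoots n ℂ, (1 - μ) := by
    rw [Polynomial.cyclotomic_eq_prod_X_sub_primitiveRoots hζ, Polynomial.eval_prod]
    simp
  have h2 : (Polynomial.cyclotomic n ℂ).eval 1
      = ((Real.exp (ArithmeticFunction.vonMangoldt n) : ℝ) : ℂ) := by
    rw [← Polynomial.map_cyclotomic n (algebraMap ℝ ℂ), Polynomial.eval_one_map,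
      cyclo_eval_real n hn]
    rfl
  rw [← h2, h1]
  refine Finset.prod_bij (fun (k : ℕ) (_ : k ∈ (Finset.Icc 1 n).filter (fun k => Nat.gcd k n = 1)) => Complex.exp (2 * π * Complex.I * (k / n))) ?_ ?_ ?_ ?_
  · intro k hk
    simp only [Finset.mem_filter, Finset.mem_Icc] at hk
    exact (mem_primitiveRoots (by omega)).2
      (Complex.isPrimitiveRoot_exp_of_coprime k n hn0 hk.2)
  · intro a ha b hb hab
    simp only [Finset.mem_filter, Finset.mem_Icc] at ha hb
    have hpow : ∀ m : ℕ, Complex.exp (2 * π * Complex.I * (m / n))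
        = Complex.exp (2 * π * Complex.I / n) ^ m := by
      intro m
      rw [← Complex.exp_nat_mul]
      ring_nf
    have ha' : a < n := by
      rcases lt_or_eq_of_le ha.1.2 with h | h
      · exact h
      · subst h; rw [Nat.gcd_self] at ha; omega
    have hb' : b < n := by
      rcases lt_or_eq_of_le hb.1.2 with h | h
      · exact h
      · subst h; rw [Nat.gcd_self] at hb; omega
    rw [hpow, hpow] at hab
    exact hζ.pow_inj ha' hb' hab
  · intro ζ' hζ'
    obtain ⟨i, hi, hic, rfl⟩ := (Complex.isPrimitiveRoot_iff ζ' n hn0).1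
      ((mem_primitiveRoots (by omega)).1 hζ')
    refine ⟨i, ?_, rfl⟩
    simp only [Finset.mem_filter, Finset.mem_Icc]
    refine ⟨⟨?_, hi.le⟩, hic⟩
    rcases Nat.eq_zero_or_pos i with rfl | h
    · rw [Nat.Coprime, Nat.gcd_zero_left] at hic; omega
    · exact h
  · intro k _; rfl

lemma prod_two_sin (n : ℕ) (hn : 2 ≤ n) :
    ∏ k ∈ (Finset.Icc 1 n).filter (fun k => Nat.gcd k n = 1),
      (2 * Real.sin (π * (k / n))) = Real.exp (ArithmeticFunction.vonMangoldt n) := by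
  have h := congrArg (fun z : ℂ => ‖z‖) (prod_one_sub_exp n hn)
  rw [norm_prod, Complex.norm_real, Real.norm_eq_abs, abs_of_nonneg (Real.exp_nonneg _)] at h
  rw [← h]
  apply Finset.prod_congr rfl
  intro k hk
  simp only [Finset.mem_filter, Finset.mem_Icc] at hk
  have hkn : k < n := by
    rcases lt_or_eq_of_le hk.1.2 with h' | h'
    · exact h'
    · subst h'; rw [Nat.gcd_self] at hk; omega
  have hk1 : 1 ≤ k := hk.1.1
  have hn0 : (0:ℝ) < n := by positivity
  have harg : 2 * (π:ℂ) * Complex.I * (k / n) = ((2 * π * k / n : ℝ) : ℂ) * Complex.I := by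
    push_cast
    ring
  rw [harg, abs_one_sub_exp (2 * π * k / n)]
  · rw [show 2 * π * (k:ℝ) / n / 2 = π * (k / n) by ring]
  · have : (0:ℝ) < (k:ℝ) / n := by positivity
    have := Real.pi_pos
    positivity
  · have hkr : (k:ℝ) / n < 1 := by
      rw [div_lt_one hn0]
      exact_mod_cast hkn
    have hp := Real.pi_pos
    calc 2 * π * k / n = 2 * π * ((k:ℝ)/n) := by ring
    _ < 2 * π * 1 := by
        apply mul_lt_mul_of_pos_left hkr (by positivity)
    _ = 2 * π := by ring

theorem gamma_prod_coprime (n : ℕ) (hn : 2 ≤ n) :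
    ∏ k ∈ (Finset.Icc 1 n).filter (fun k => Nat.gcd k n = 1),
        Real.Gamma ((k : ℝ) / n) =
      (2 * π) ^ ((n.totient : ℝ) / 2) /
        Real.exp (ArithmeticFunction.vonMangoldt n / 2) := by
  set S := (Finset.Icc 1 n).filter (fun k => Nat.gcd k n = 1) with hS
  have hmem : ∀ k ∈ S, 1 ≤ k ∧ k < n ∧ Nat.gcd k n = 1 := by
    intro k hk
    simp only [hS, Finset.mem_filter, Finset.mem_Icc] at hk
    refine ⟨hk.1.1, ?_, hk.2⟩
    rcases lt_or_eq_of_le hk.1.2 with h | h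
    · exact h
    · subst h; rw [Nat.gcd_self] at hk; omega
  have hnR : (0:ℝ) < n := by positivity
  set P := ∏ k ∈ S, Real.Gamma ((k : ℝ) / n) with hP
  have hargpos : ∀ k ∈ S, (0:ℝ) < (k:ℝ) / n ∧ (k:ℝ) / n < 1 := by
    intro k hk
    obtain ⟨h1, h2, -⟩ := hmem k hk
    constructor
    · positivity
    · rw [div_lt_one hnR]; exact_mod_cast h2
  have hPpos : 0 < P := by
    apply Finset.prod_pos
    intro k hk
    exact Real.Gamma_pos_of_pos (hargpos k hk).1
  -- reindex by k ↦ n - k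
  have hrev : ∏ k ∈ S, Real.Gamma (1 - (k : ℝ) / n) = P := by
    rw [hP]
    refine Finset.prod_nbij' (fun k => n - k) (fun k => n - k) ?_ ?_ ?_ ?_ ?_
    · intro k hk
      obtain ⟨h1, h2, h3⟩ := hmem k hk
      simp only [hS, Finset.mem_filter, Finset.mem_Icc]
      exact ⟨⟨by omega, by omega⟩, (Nat.coprime_self_sub_left (by omega)).2 h3⟩
    · intro k hk
      obtain ⟨h1, h2, h3⟩ := hmem k hk
      simp only [hS, Finset.mem_filter, Finset.mem_Icc]
      exact ⟨⟨by omega, by omega⟩, (Nat.coprime_self_sub_left (by omega)).2 h3⟩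
    · intro k hk; obtain ⟨h1, h2, -⟩ := hmem k hk; omega
    · intro k hk; obtain ⟨h1, h2, -⟩ := hmem k hk; omega
    · intro k hk
      obtain ⟨h1, h2, -⟩ := hmem k hk
      congr 1
      rw [Nat.cast_sub (by omega)]
      field_simp
  have hsq : P * P = ∏ k ∈ S, (π / Real.sin (π * ((k:ℝ) / n))) := by
    calc P * P = ∏ k ∈ S, (Real.Gamma ((k:ℝ)/n) * Real.Gamma (1 - (k:ℝ)/n)) := by
          rw [Finset.prod_mul_distrib, hrev, hP]
    _ = ∏ k ∈ S, (π / Real.sin (π * ((k:ℝ) / n))) := by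
          apply Finset.prod_congr rfl
          intro k hk
          exact Real.Gamma_mul_Gamma_one_sub _
  have hsin : ∏ k ∈ S, Real.sin (π * ((k:ℝ)/n))
      = Real.exp (ArithmeticFunction.vonMangoldt n) / 2 ^ n.totient := by
    have h2 := prod_two_sin n hn
    rw [Finset.prod_mul_distrib, Finset.prod_const, ← hS, card_filter_coprime n hn] at h2
    rw [← h2]
    field_simp
  have hsinpos : ∀ k ∈ S, 0 < Real.sin (π * ((k:ℝ)/n)) := by
    intro k hk
    obtain ⟨h1, h2⟩ := hargpos k hk
    apply Real.sin_pos_of_pos_of_lt_pi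
    · positivity
    · nlinarith [Real.pi_pos]
  have hsq2 : P * P = (2 * π) ^ n.totient / Real.exp (ArithmeticFunction.vonMangoldt n) := by
    have hcard : S.card = n.totient := by rw [hS]; exact card_filter_coprime n hn
    rw [hsq, Finset.prod_div_distrib, Finset.prod_const, hcard, hsin]
    have hexp : (0:ℝ) < Real.exp (ArithmeticFunction.vonMangoldt n) := Real.exp_pos _
    rw [mul_pow]
    field_simp
  set R := (2 * π) ^ ((n.totient : ℝ) / 2) / Real.exp (ArithmeticFunction.vonMangoldt n / 2) with hR
  have hRpos : 0 < R := by
    apply div_pos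
    · exact Real.rpow_pos_of_pos (by positivity) _
    · exact Real.exp_pos _
  have hRsq : R * R = (2 * π) ^ n.totient / Real.exp (ArithmeticFunction.vonMangoldt n) := by
    rw [hR, div_mul_div_comm, ← Real.exp_add, ← Real.rpow_natCast (2 * π) n.totient]
    rw [← Real.rpow_add (by positivity)]
    norm_num
  have := hsq2.trans hRsq.symm
  rcases mul_self_eq_mul_self_iff.1 this with h | h
  · exact h
  · nlinarith
end

section
/- For every integer n ≥ 2 that is not a prime power, the product of Γ(k/n) over all integers k with 1 ≤ k ≤ n and gcd(k,n) = 1 equals (2π)^(φ(n)/2). -/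
open Real Finset

lemma abs_one_sub_exp_mul_I (x : ℝ) :
    ‖1 - Complex.exp (x * Complex.I)‖ = 2 * |Real.sin (x / 2)| := by
  rw [show ((x : ℂ) * Complex.I) = ((x : ℝ) : ℂ) * Complex.I from rfl, Complex.exp_mul_I]
  have h1 : (1 : ℂ) - (Complex.cos x + Complex.sin x * Complex.I)
      = ((1 - Real.cos x : ℝ) : ℂ) + ((- Real.sin x : ℝ) : ℂ) * Complex.I := by
    push_cast; ring
  rw [h1, Complex.norm_def, Complex.normSq_add_mul_I]
  have h2 : (1 - Real.cos x) ^ 2 + (- Real.sin x) ^ 2 = (2 * |Real.sin (x / 2)|) ^ 2 := by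
    have h3 := Real.abs_sin_half x
    have h4 : |Real.sin (x / 2)| ^ 2 = (1 - Real.cos x) / 2 := by
      rw [h3, Real.sq_sqrt]
      nlinarith [Real.cos_le_one x]
    have h5 := Real.sin_sq_add_cos_sq x
    nlinarith
  rw [h2, Real.sqrt_sq (by positivity)]

theorem gamma_prod_coprime_not_prime_pow (n : ℕ) (hn : 2 ≤ n) (h : ¬ IsPrimePow n) :
    ∏ k ∈ (Finset.Icc 1 n).filter (fun k => Nat.gcd k n = 1),
        Real.Gamma ((k : ℝ) / n) = (2 * π) ^ ((n.totient : ℝ) / 2) := by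
  have hn0 : (n : ℕ) ≠ 0 := by omega
  have hn0' : (0 : ℝ) < n := by positivity
  haveI : NeZero n := ⟨hn0⟩
  set T : Finset ℕ := (Finset.range n).filter (fun k => k.Coprime n) with hT
  -- the index set equals T
  have hset : (Finset.Icc 1 n).filter (fun k => Nat.gcd k n = 1) = T := by
    ext k
    simp only [hT, mem_filter, mem_Icc, mem_range, Nat.Coprime]
    constructor
    · rintro ⟨⟨h1, h2⟩, hg⟩
      refine ⟨?_, hg⟩
      rcases eq_or_lt_of_le h2 with rfl | h2
      · simp [Nat.gcd_self] at hg; omega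
      · exact h2
    · rintro ⟨h1, hg⟩
      have hk1 : 1 ≤ k := by
        rcases Nat.eq_zero_or_pos k with rfl | hk
        · simp [Nat.gcd_zero_left] at hg; omega
        · exact hk
      exact ⟨⟨hk1, le_of_lt h1⟩, hg⟩
  rw [hset]
  have hcard : T.card = n.totient := by
    rw [hT, Nat.totient]
    congr 1
    ext k; simp [Nat.Coprime, Nat.gcd_comm]
  -- members of T satisfy 1 ≤ k < n
  have hmem : ∀ k ∈ T, 1 ≤ k ∧ k < n := by
    intro k hk
    rw [hT, mem_filter, mem_range] at hk
    refine ⟨?_, hk.1⟩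
    rcases Nat.eq_zero_or_pos k with rfl | hpos
    · exfalso; have := hk.2; simp [Nat.Coprime] at this; omega
    · exact hpos
  -- cyclotomic evaluation: product of (1 - ζ^k) = 1
  set ζ : ℂ := Complex.exp (2 * Real.pi * Complex.I / n) with hζdef
  have hζ : IsPrimitiveRoot ζ n := Complex.isPrimitiveRoot_exp n hn0
  have hprim : primitiveRoots n ℂ = T.image (fun k => ζ ^ k) := by
    ext x
    rw [mem_primitiveRoots (by omega : 0 < n), hζ.isPrimitiveRoot_iff]
    simp only [Finset.mem_image, hT, mem_filter, mem_range]
    constructor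
    · rintro ⟨i, hi, hc, rfl⟩; exact ⟨i, ⟨hi, hc⟩, rfl⟩
    · rintro ⟨i, ⟨hi, hc⟩, rfl⟩; exact ⟨i, hi, hc, rfl⟩
  have hcyc : ∏ k ∈ T, (1 - ζ ^ k) = 1 := by
    have he : Polynomial.eval (1 : ℂ) (Polynomial.cyclotomic n ℂ) = 1 := by
      apply Polynomial.eval_one_cyclotomic_not_prime_pow
      intro p hp k hpk
      exact h ⟨p, k, hp.prime, by
        rcases Nat.eq_zero_or_pos k with rfl | hk
        · exfalso; simp at hpk; omega
        · exact hk, hpk⟩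
    rw [Polynomial.cyclotomic_eq_prod_X_sub_primitiveRoots hζ] at he
    rw [Polynomial.eval_prod] at he
    simp only [Polynomial.eval_sub, Polynomial.eval_X, Polynomial.eval_C] at he
    rw [hprim, Finset.prod_image] at he
    · exact he
    · intro a ha b hb hab
      exact hζ.injOn_pow (by simpa using (hmem a ha).2) (by simpa using (hmem b hb).2) hab
  -- sine product
  have hζk : ∀ k : ℕ, ζ ^ k = Complex.exp (((2 * Real.pi * k / n : ℝ) : ℂ) * Complex.I) := by
    intro k
    rw [hζdef, ← Complex.exp_nat_mul]
    congr 1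
    push_cast
    ring
  have hsin : ∏ k ∈ T, Real.sin (π * (k / n)) = (1 / 2) ^ n.totient := by
    have habs : ∏ k ∈ T, ‖1 - ζ ^ k‖ = 1 := by
      rw [← Complex.norm_prod, hcyc, norm_one]
    have heach : ∀ k ∈ T, ‖1 - ζ ^ k‖ = 2 * Real.sin (π * (k / n)) := by
      intro k hk
      rw [hζk k, abs_one_sub_exp_mul_I]
      have h1 : (2 * Real.pi * k / n) / 2 = π * (k / n) := by ring
      rw [h1, abs_of_nonneg]
      apply Real.sin_nonneg_of_nonneg_of_le_pi
      · positivity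
      · have := (hmem k hk).2
        rw [mul_comm]
        apply mul_le_of_le_one_left Real.pi_pos.le
        rw [div_le_one hn0']
        exact_mod_cast this.le
    rw [Finset.prod_congr rfl heach, Finset.prod_mul_distrib, Finset.prod_const, hcard] at habs
    have h2 : ((2 : ℝ)) ^ n.totient ≠ 0 := by positivity
    rw [div_pow, one_pow, eq_div_iff h2, mul_comm]
    exact habs
  -- positivity of each Gamma factor
  have hpos : ∀ k ∈ T, 0 < Real.Gamma ((k : ℝ) / n) := by
    intro k hk
    apply Real.Gamma_pos_of_pos
    have := (hmem k hk).1
    have : (0:ℝ) < k := by exact_mod_cast this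
    positivity
  set P : ℝ := ∏ k ∈ T, Real.Gamma ((k : ℝ) / n) with hP
  have hPpos : 0 < P := Finset.prod_pos hpos
  -- reflection: P^2 = (2π)^totient
  have hrefl : P ^ 2 = (2 * π) ^ n.totient := by
    have hbij : ∏ k ∈ T, Real.Gamma ((k : ℝ) / n)
        = ∏ k ∈ T, Real.Gamma (1 - (k : ℝ) / n) := by
      apply Finset.prod_nbij' (fun k => n - k) (fun k => n - k)
      · intro k hk
        have hm := hmem k hk
        rw [hT, mem_filter, mem_range] at hk ⊢
        constructor
        · omega
        · exact (Nat.coprime_self_sub_left (le_of_lt hm.2)).mpr hk.2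
      · intro k hk
        have hm := hmem k hk
        rw [hT, mem_filter, mem_range] at hk ⊢
        constructor
        · omega
        · exact (Nat.coprime_self_sub_left (le_of_lt hm.2)).mpr hk.2
      · intro k hk; have := hmem k hk; omega
      · intro k hk; have := hmem k hk; omega
      · intro k hk
        have hm := hmem k hk
        congr 1
        have hcast : ((n - k : ℕ) : ℝ) = (n : ℝ) - k := by
          rw [Nat.cast_sub (le_of_lt hm.2)]
        rw [hcast]
        field_simp
        ring
    have : P ^ 2 = ∏ k ∈ T, (Real.Gamma ((k : ℝ) / n) * Real.Gamma (1 - (k : ℝ) / n)) := by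
      rw [Finset.prod_mul_distrib, ← hbij, ← hP, sq]
    rw [this]
    have heach : ∀ k ∈ T, Real.Gamma ((k : ℝ) / n) * Real.Gamma (1 - (k : ℝ) / n)
        = π / Real.sin (π * ((k : ℝ) / n)) := fun k _ => Real.Gamma_mul_Gamma_one_sub _
    rw [Finset.prod_congr rfl heach, Finset.prod_div_distrib, Finset.prod_const, hcard, hsin]
    rw [div_pow, one_pow, div_div_eq_mul_div, div_one, mul_pow, mul_comm]
  -- conclude
  have h2pi : (0:ℝ) < 2 * π := by positivity
  have : P = Real.sqrt ((2 * π) ^ n.totient) := by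
    rw [← hrefl, Real.sqrt_sq hPpos.le]
  rw [this, Real.sqrt_eq_rpow, ← Real.rpow_natCast (2 * π) n.totient, ← Real.rpow_mul h2pi.le]
  congr 1
  ring
end

section
/- The integral of log Γ(x) over the interval (0,1) equals (1/2)·log(2π). -/
open Real MeasureTheory intervalIntegral

lemma intLog01 : IntervalIntegrable Real.log volume 0 1 := by
  have hg : IntervalIntegrable (fun x : ℝ => 2 * x ^ (-(1/2) : ℝ)) volume 0 1 :=
    (intervalIntegrable_rpow' (by norm_num)).const_mul 2
  refine hg.mono_fun' Real.measurable_log.aestronglyMeasurable.restrict ?_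
  rw [Filter.EventuallyLE, ae_restrict_iff' measurableSet_uIoc]
  refine Filter.Eventually.of_forall (fun x hx => ?_)
  rw [Set.uIoc_of_le (by norm_num : (0:ℝ) ≤ 1)] at hx
  obtain ⟨hx0, hx1⟩ := hx
  have ht : (0:ℝ) < x ^ ((1:ℝ)/2) := Real.rpow_pos_of_pos hx0 _
  have h1 : Real.log x = 2 * Real.log (x ^ ((1:ℝ)/2)) := by
    rw [Real.log_rpow hx0]; ring
  have h2 : Real.log ((x ^ ((1:ℝ)/2))⁻¹) ≤ (x ^ ((1:ℝ)/2))⁻¹ - 1 :=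
    Real.log_le_sub_one_of_pos (by positivity)
  rw [Real.log_inv] at h2
  have h3 : x ^ (-(1/2) : ℝ) = (x ^ ((1:ℝ)/2))⁻¹ := by
    rw [← Real.rpow_neg hx0.le]
  have hlogx : Real.log x ≤ 0 := Real.log_nonpos hx0.le hx1
  simp only [Real.norm_eq_abs, abs_of_nonpos hlogx, h3]
  linarith

lemma intLogHalfPi : IntervalIntegrable Real.log volume 0 (π/2) := by
  have h2 : IntervalIntegrable Real.log volume 1 (π/2) := by
    apply intervalIntegrable_log
    intro h
    rw [Set.mem_uIcc] at h
    have := Real.pi_gt_three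
    rcases h with ⟨h1, _⟩ | ⟨_, h2⟩ <;> linarith
  exact intLog01.trans h2

lemma intLogSinHalf : IntervalIntegrable (fun x : ℝ => Real.log (Real.sin x)) volume 0 (π/2) := by
  have hpi := Real.pi_gt_three
  have hg : IntervalIntegrable (fun x : ℝ => |Real.log x| + π) volume 0 (π/2) :=
    intLogHalfPi.abs.add intervalIntegrable_const
  refine hg.mono_fun' ?_ ?_
  · exact (Real.measurable_log.comp Real.measurable_sin).aestronglyMeasurable.restrict
  · rw [Filter.EventuallyLE, ae_restrict_iff' measurableSet_uIoc]
    refine Filter.Eventually.of_forall (fun x hx => ?_)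
    rw [Set.uIoc_of_le (by positivity)] at hx
    obtain ⟨hx0, hx2⟩ := hx
    have hs0 : 0 < Real.sin x := Real.sin_pos_of_pos_of_lt_pi hx0 (by linarith)
    have hs1 : Real.sin x ≤ 1 := Real.sin_le_one x
    have hlb : 2/π * x ≤ Real.sin x := Real.mul_le_sin hx0.le hx2
    have h1 : Real.log (2/π * x) ≤ Real.log (Real.sin x) :=
      Real.log_le_log (by positivity) hlb
    rw [Real.log_mul (by positivity) (ne_of_gt hx0), Real.log_div (by norm_num) (by positivity)] at h1
    have h2 : Real.log (Real.sin x) ≤ 0 := Real.log_nonpos hs0.le hs1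
    have h5 : Real.log π ≤ π - 1 := Real.log_le_sub_one_of_pos (by positivity)
    have h6 : 0 ≤ Real.log 2 := Real.log_nonneg (by norm_num)
    simp only [Real.norm_eq_abs, abs_of_nonpos h2]
    linarith [neg_le_abs (Real.log x)]

lemma intLogCosHalf : IntervalIntegrable (fun x : ℝ => Real.log (Real.cos x)) volume 0 (π/2) := by
  have := intLogSinHalf.comp_sub_left (π/2)
  simpa [Real.sin_pi_div_two_sub, sub_half] using this.symm

lemma intLogSinSecond : IntervalIntegrable (fun x : ℝ => Real.log (Real.sin x)) volume (π/2) π := by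
  have := intLogSinHalf.comp_sub_left π
  simpa [Real.sin_pi_sub, sub_half] using this.symm

lemma intLogSinPi : IntervalIntegrable (fun x : ℝ => Real.log (Real.sin x)) volume 0 π :=
  intLogSinHalf.trans intLogSinSecond

lemma intLogSinPiMul : IntervalIntegrable (fun x : ℝ => Real.log (Real.sin (π * x))) volume 0 1 := by
  have := intLogSinPi.comp_mul_left (c := π)
  simpa [Real.pi_ne_zero] using this

lemma logCos_eq_logSin :
    ∫ x in (0:ℝ)..(π/2), Real.log (Real.cos x) = ∫ x in (0:ℝ)..(π/2), Real.log (Real.sin x) := by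
  have := integral_comp_sub_left (fun x : ℝ => Real.log (Real.sin x)) (π/2) (a := 0) (b := π/2)
  simpa [Real.sin_pi_div_two_sub, sub_half] using this

lemma logSin_second :
    ∫ x in (π/2:ℝ)..π, Real.log (Real.sin x) = ∫ x in (0:ℝ)..(π/2), Real.log (Real.sin x) := by
  have := integral_comp_sub_left (fun x : ℝ => Real.log (Real.sin x)) π (a := 0) (b := π/2)
  simpa [Real.sin_pi_sub, sub_half] using this.symm

lemma ae_ne (c : ℝ) : ∀ᵐ x : ℝ ∂volume, x ≠ c := by
  rw [MeasureTheory.ae_iff]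
  simp

lemma logSin_half_value :
    ∫ x in (0:ℝ)..(π/2), Real.log (Real.sin x) = -(π/2) * Real.log 2 := by
  set A := ∫ x in (0:ℝ)..(π/2), Real.log (Real.sin x) with hA
  have hpi := Real.pi_pos
  have hdouble : ∫ x in (0:ℝ)..(π/2), Real.log (Real.sin (2*x)) = A := by
    have h1 := integral_comp_mul_left (fun x : ℝ => Real.log (Real.sin x))
      (a := 0) (b := π/2) (c := 2) (by norm_num)
    have h2 : ∫ x in (0:ℝ)..π, Real.log (Real.sin x) = A + A := by
      rw [← integral_add_adjacent_intervals intLogSinHalf intLogSinSecond, logSin_second]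
    rw [h1]
    simp only [mul_zero]
    rw [show (2 : ℝ) * (π/2) = π by ring, h2]
    simp; ring
  have hsplit : ∫ x in (0:ℝ)..(π/2), Real.log (Real.sin (2*x))
      = ∫ x in (0:ℝ)..(π/2), (Real.log 2 + Real.log (Real.sin x) + Real.log (Real.cos x)) := by
    apply intervalIntegral.integral_congr_ae
    filter_upwards [ae_ne (π/2)] with x hne hx
    rw [Set.uIoc_of_le (by positivity)] at hx
    obtain ⟨hx0, hx2⟩ := hx
    have hx2' : x < π/2 := lt_of_le_of_ne hx2 hne
    have hs : 0 < Real.sin x := Real.sin_pos_of_pos_of_lt_pi hx0 (by linarith)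
    have hc : 0 < Real.cos x := Real.cos_pos_of_mem_Ioo ⟨by linarith, hx2'⟩
    rw [Real.sin_two_mul, Real.log_mul (by positivity) (ne_of_gt hc),
      Real.log_mul (by norm_num) (ne_of_gt hs)]
  have hsum : ∫ x in (0:ℝ)..(π/2), (Real.log 2 + Real.log (Real.sin x) + Real.log (Real.cos x))
      = (π/2) * Real.log 2 + A + A := by
    rw [integral_add (intervalIntegrable_const.add intLogSinHalf) intLogCosHalf,
      integral_add intervalIntegrable_const intLogSinHalf, logCos_eq_logSin]
    simp [← hA]
  have : A = (π/2) * Real.log 2 + A + A := by rw [← hsum, ← hsplit, hdouble]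
  linarith

lemma logSinPiMul_value :
    ∫ x in (0:ℝ)..1, Real.log (Real.sin (π * x)) = -Real.log 2 := by
  have h1 := integral_comp_mul_left (fun x : ℝ => Real.log (Real.sin x))
    (a := 0) (b := 1) (c := π) Real.pi_ne_zero
  have h2 : ∫ x in (0:ℝ)..π, Real.log (Real.sin x) = -π * Real.log 2 := by
    rw [← integral_add_adjacent_intervals intLogSinHalf intLogSinSecond, logSin_second,
      logSin_half_value]
    ring
  rw [h1]
  simp only [mul_zero, mul_one, h2, smul_eq_mul]
  field_simp

lemma contLogGammaShift : ContinuousOn (fun x : ℝ => Real.log (Real.Gamma (x+1))) (Set.uIcc 0 1) := by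
  intro x hx
  rw [Set.uIcc_of_le (by norm_num : (0:ℝ) ≤ 1)] at hx
  have hx1 : 0 < x + 1 := by have := hx.1; linarith
  have hdiff : DifferentiableAt ℝ Real.Gamma (x+1) := by
    apply Real.differentiableAt_Gamma
    intro m
    have : (0:ℝ) ≤ m := Nat.cast_nonneg m
    intro h; rw [h] at hx1; linarith
  have hc : ContinuousAt (fun x : ℝ => Real.Gamma (x+1)) x :=
    ContinuousAt.comp (x := x) (g := Real.Gamma) hdiff.continuousAt
      ((continuous_id.add continuous_const).continuousAt)
  exact (hc.log (Real.Gamma_pos_of_pos hx1).ne').continuousWithinAt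

lemma intLogGamma : IntervalIntegrable (fun x : ℝ => Real.log (Real.Gamma x)) volume 0 1 := by
  have hg : IntervalIntegrable (fun x : ℝ => Real.log (Real.Gamma (x+1)) - Real.log x)
      volume 0 1 :=
    (contLogGammaShift.intervalIntegrable).sub intLog01
  apply hg.congr_ae
  rw [Filter.EventuallyEq, ae_restrict_iff' measurableSet_uIoc]
  refine Filter.Eventually.of_forall (fun x hx => ?_)
  rw [Set.uIoc_of_le (by norm_num : (0:ℝ) ≤ 1)] at hx
  obtain ⟨hx0, _⟩ := hx
  rw [Real.Gamma_add_one (ne_of_gt hx0), Real.log_mul (ne_of_gt hx0)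
    (Real.Gamma_pos_of_pos hx0).ne']
  ring

theorem integral_log_gamma :
    ∫ x in (0 : ℝ)..1, Real.log (Real.Gamma x) = (1 / 2) * Real.log (2 * π) := by
  have hpi := Real.pi_pos
  set I := ∫ x in (0 : ℝ)..1, Real.log (Real.Gamma x) with hI
  have hrefl : IntervalIntegrable (fun x : ℝ => Real.log (Real.Gamma (1-x))) volume 0 1 := by
    have := intLogGamma.comp_sub_left 1
    simpa using this.symm
  have hreflval : ∫ x in (0:ℝ)..1, Real.log (Real.Gamma (1-x)) = I := by
    have := integral_comp_sub_left (fun x : ℝ => Real.log (Real.Gamma x)) 1 (a := 0) (b := 1)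
    simpa using this
  have hkey : ∫ x in (0:ℝ)..1, (Real.log (Real.Gamma x) + Real.log (Real.Gamma (1-x)))
      = ∫ x in (0:ℝ)..1, (Real.log π - Real.log (Real.sin (π * x))) := by
    apply intervalIntegral.integral_congr_ae
    filter_upwards [ae_ne 1] with x hne hx
    rw [Set.uIoc_of_le (by norm_num : (0:ℝ) ≤ 1)] at hx
    obtain ⟨hx0, hx1⟩ := hx
    have hx1' : x < 1 := lt_of_le_of_ne hx1 hne
    have hG1 : 0 < Real.Gamma x := Real.Gamma_pos_of_pos hx0
    have hG2 : 0 < Real.Gamma (1-x) := Real.Gamma_pos_of_pos (by linarith)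
    have hs : 0 < Real.sin (π * x) := Real.sin_pos_of_pos_of_lt_pi (by positivity)
      (by nlinarith)
    rw [← Real.log_mul hG1.ne' hG2.ne', Real.Gamma_mul_Gamma_one_sub,
      Real.log_div Real.pi_ne_zero hs.ne']
  have hsum : I + I = Real.log π + Real.log 2 := by
    have h0 : I + I = ∫ x in (0:ℝ)..1,
        (Real.log (Real.Gamma x) + Real.log (Real.Gamma (1-x))) := by
      rw [integral_add intLogGamma hrefl, hreflval, ← hI]
    rw [h0, hkey, integral_sub intervalIntegrable_const intLogSinPiMul, logSinPiMul_value]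
    simp
  have hlog : Real.log (2 * π) = Real.log 2 + Real.log π :=
    Real.log_mul (by norm_num) Real.pi_ne_zero
  rw [hlog]
  linarith
end
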